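/- Let 0 < r ≤ 1 and let S be a nonempty subset of the closed disk D(1,r). Then the Minkowski product D(1,r)·S is star-shaped with 1 - r² as a star center. -/

import Mathlib

open Complex Set Metric

lemma stmt_15_key (r : ℝ) (hr1 : r ≤ 1) (s : ℂ) (hs : ‖s - 1‖ ≤ r) :
    ‖s - ((1 - r ^ 2 : ℝ) : ℂ)‖ ≤ r * ‖s‖ := by
  have hr0 : (0:ℝ) ≤ r := le_trans (norm_nonneg _) hs
  have h1 : ‖s - 1‖ ^ 2 ≤ r ^ 2 := by nlinarith [norm_nonneg (s - 1)]
  have e : ∀ z : ℂ, ‖z‖ ^ 2 = z.re ^ 2 + z.im ^ 2 := fun z => by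
    rw [← Complex.normSq_eq_norm_sq, Complex.normSq_apply]; ring
  have e1 : ‖s - 1‖ ^ 2 = (s.re - 1) ^ 2 + s.im ^ 2 := by rw [e]; simp
  have e2 : ‖s - ((1 - r ^ 2 : ℝ) : ℂ)‖ ^ 2 = (s.re - (1 - r ^ 2)) ^ 2 + s.im ^ 2 := by
    rw [e, Complex.sub_re, Complex.sub_im, Complex.ofReal_re, Complex.ofReal_im]; ring
  have e3 : ‖s‖ ^ 2 = s.re ^ 2 + s.im ^ 2 := e s
  have h2 : ‖s - ((1 - r ^ 2 : ℝ) : ℂ)‖ ^ 2 ≤ (r * ‖s‖) ^ 2 := by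
    rw [e2, mul_pow, e3]
    rw [e1] at h1
    have hr2 : r ^ 2 ≤ 1 := by nlinarith
    nlinarith [mul_nonneg (sub_nonneg.2 hr2) (sub_nonneg.2 h1)]
  nlinarith [norm_nonneg (s - ((1 - r ^ 2 : ℝ) : ℂ)), mul_nonneg hr0 (norm_nonneg s)]

lemma stmt_15_main (r : ℝ) (hr : 0 < r) (S : Set ℂ) (s : ℂ) (hsS : s ∈ S)
    (w : ℂ) (hw : ‖w - s‖ ≤ r * ‖s‖) :
    w ∈ Set.image2 (· * ·) (Metric.closedBall (1 : ℂ) r) S := by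
  by_cases h0 : s = 0
  · subst h0
    have : w = 0 := by
      have := hw; simp at this
      simpa [sub_eq_zero] using norm_le_zero_iff.mp (by simpa using hw)
    refine ⟨1, ?_, 0, hsS, by simp [this]⟩
    simp [Metric.mem_closedBall]; exact hr.le
  · refine ⟨w / s, ?_, s, hsS, by field_simp⟩
    rw [Metric.mem_closedBall, dist_eq_norm]
    have : w / s - 1 = (w - s) / s := by field_simp
    rw [this, norm_div]
    rw [div_le_iff₀ (norm_pos_iff.mpr h0)]
    exact hw

theorem stmt_15 (r : ℝ) (hr : 0 < r) (hr1 : r ≤ 1) (S : Set ℂ)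
    (hS : S.Nonempty) (hSsub : S ⊆ Metric.closedBall (1 : ℂ) r) :
    ((1 - r ^ 2 : ℝ) : ℂ) ∈ Set.image2 (· * ·) (Metric.closedBall (1 : ℂ) r) S ∧
      ∀ z ∈ Set.image2 (· * ·) (Metric.closedBall (1 : ℂ) r) S, ∀ t ∈ Set.Icc (0:ℝ) 1,
        ((1 - t) : ℂ) * ((1 - r ^ 2 : ℝ) : ℂ) + (t : ℂ) * z ∈
          Set.image2 (· * ·) (Metric.closedBall (1 : ℂ) r) S := by
  have norm_ball : ∀ s ∈ S, ‖s - 1‖ ≤ r := by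
    intro s hs
    have := hSsub hs
    rwa [Metric.mem_closedBall, dist_eq_norm] at this
  constructor
  · obtain ⟨s₀, hs₀⟩ := hS
    apply stmt_15_main r hr S s₀ hs₀
    rw [← norm_neg, neg_sub]
    exact stmt_15_key r hr1 s₀ (norm_ball s₀ hs₀)
  · rintro z ⟨a, ha, s, hsS, rfl⟩ t ⟨ht0, ht1⟩
    apply stmt_15_main r hr S s hsS
    have ha' : ‖a - 1‖ ≤ r := by
      rwa [Metric.mem_closedBall, dist_eq_norm] at ha
    have hdecomp : ((1 - t) : ℂ) * ((1 - r ^ 2 : ℝ) : ℂ) + (t : ℂ) * (a * s) - s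
        = ((1 - t : ℝ) : ℂ) * (((1 - r ^ 2 : ℝ) : ℂ) - s) + ((t : ℝ) : ℂ) * ((a - 1) * s) := by
      push_cast; ring
    rw [hdecomp]
    calc ‖((1 - t : ℝ) : ℂ) * (((1 - r ^ 2 : ℝ) : ℂ) - s) + ((t : ℝ) : ℂ) * ((a - 1) * s)‖
        ≤ ‖((1 - t : ℝ) : ℂ) * (((1 - r ^ 2 : ℝ) : ℂ) - s)‖ + ‖((t : ℝ) : ℂ) * ((a - 1) * s)‖ :=
          norm_add_le _ _
      _ = (1 - t) * ‖((1 - r ^ 2 : ℝ) : ℂ) - s‖ + t * (‖a - 1‖ * ‖s‖) := by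
          rw [norm_mul, norm_mul, norm_mul, Complex.norm_real, Complex.norm_real,
            Real.norm_eq_abs, Real.norm_eq_abs,
            _root_.abs_of_nonneg (by linarith : (0:ℝ) ≤ 1 - t), _root_.abs_of_nonneg ht0]
      _ ≤ (1 - t) * (r * ‖s‖) + t * (r * ‖s‖) := by
          have h1 : ‖((1 - r ^ 2 : ℝ) : ℂ) - s‖ ≤ r * ‖s‖ := by
            rw [← norm_neg, neg_sub]
            exact stmt_15_key r hr1 s (norm_ball s hsS)
          have h2 : ‖a - 1‖ * ‖s‖ ≤ r * ‖s‖ :=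
            mul_le_mul_of_nonneg_right ha' (norm_nonneg s)
          have := sub_nonneg.2 ht1
          gcongr
      _ = r * ‖s‖ := by ring
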